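/- For any integer m ≥ 1 and any prime p not dividing m, Σ_{k=1}^{p-1} (−m)^{p-1-k} B_{k+2} ≡ (−1)^m (D_m − D_{m+1}) (mod p). -/

import Mathlib

open Polynomial Finset

/-- Stirling numbers of the second kind. -/
def stirling2 : ℕ → ℕ → ℕ
  | 0, 0 => 1
  | 0, _ + 1 => 0
  | _ + 1, 0 => 0
  | n + 1, k + 1 => (k + 1) * stirling2 n (k + 1) + stirling2 n k

/-- Signed Stirling numbers of the first kind. -/
def stirling1 : ℕ → ℕ → ℤ
  | 0, 0 => 1
  | 0, _ + 1 => 0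
  | n + 1, 0 => -(n : ℤ) * stirling1 n 0
  | n + 1, k + 1 => stirling1 n k - (n : ℤ) * stirling1 n (k + 1)

/-- The Bell polynomial `B_m(x) = ∑_{j=0}^m S(m,j) x^j` over `ℤ`. -/
noncomputable def bellPoly (m : ℕ) : Polynomial ℤ :=
  ∑ j ∈ range (m + 1), (stirling2 m j : ℤ) • X ^ j

/-- The derangement polynomial `D_m(x) = ∑_{j=0}^m C(m,j) j! (x-1)^{m-j}` over `ℤ`. -/
noncomputable def derPoly (m : ℕ) : Polynomial ℤ :=
  ∑ j ∈ range (m + 1), ((m.choose j * j.factorial : ℕ) : ℤ) • (X - 1) ^ (m - j)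

/-- The Bell numbers `B_m = ∑_j S(m,j)`. -/
def bell (m : ℕ) : ℕ := ∑ j ∈ range (m + 1), stirling2 m j

namespace SunZagierAux

lemma stirling2_zero_right (n : ℕ) : stirling2 (n + 1) 0 = 0 := rfl

lemma stirling2_succ (n k : ℕ) :
    stirling2 (n + 1) (k + 1) = (k + 1) * stirling2 n (k + 1) + stirling2 n k := rfl

lemma stirling2_eq_zero : ∀ {n k : ℕ}, n < k → stirling2 n k = 0
  | 0, _ + 1, _ => rfl
  | n + 1, k + 1, h => by
      rw [stirling2_succ, stirling2_eq_zero (show n < k + 1 by omega),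
        stirling2_eq_zero (show n < k by omega)]
      simp

lemma stirling2_binom (n : ℕ) : ∀ j : ℕ,
    ∑ k ∈ range (n + 1), n.choose k * stirling2 k j = stirling2 (n + 1) (j + 1) := by
  induction n with
  | zero =>
    intro j
    rw [stirling2_succ]
    simp [show stirling2 0 (j + 1) = 0 from rfl]
  | succ n ih =>
    intro j
    rw [Finset.sum_range_succ']
    have h1 : ∀ k ∈ range (n + 1), (n + 1).choose (k + 1) * stirling2 (k + 1) j
        = n.choose k * stirling2 (k + 1) j + n.choose (k + 1) * stirling2 (k + 1) j := by
      intro k _; rw [Nat.choose_succ_succ, add_mul]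
    rw [Finset.sum_congr rfl h1, Finset.sum_add_distrib, add_assoc]
    have h2 : (∑ k ∈ range (n + 1), n.choose (k + 1) * stirling2 (k + 1) j)
        + n.choose 0 * stirling2 0 j = stirling2 (n + 1) (j + 1) := by
      calc (∑ k ∈ range (n + 1), n.choose (k + 1) * stirling2 (k + 1) j)
            + n.choose 0 * stirling2 0 j
          = ∑ k ∈ range (n + 2), n.choose k * stirling2 k j :=
            (Finset.sum_range_succ' (fun k => n.choose k * stirling2 k j) (n + 1)).symm
        _ = (∑ k ∈ range (n + 1), n.choose k * stirling2 k j)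
            + n.choose (n + 1) * stirling2 (n + 1) j :=
            Finset.sum_range_succ (fun k => n.choose k * stirling2 k j) (n + 1)
        _ = stirling2 (n + 1) (j + 1) := by
            rw [Nat.choose_succ_self, zero_mul, add_zero, ih]
    rw [show (n + 1).choose 0 * stirling2 0 j = n.choose 0 * stirling2 0 j by
      simp [Nat.choose_zero_right], h2]
    cases j with
    | zero =>
      have hz : ∀ k ∈ range (n + 1), n.choose k * stirling2 (k + 1) 0 = 0 := by
        intro k _; rw [stirling2_zero_right, mul_zero]
      rw [Finset.sum_eq_zero hz, zero_add, stirling2_succ (n + 1) 0, stirling2_zero_right,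
        add_zero]
      ring
    | succ j =>
      have hs : ∀ k ∈ range (n + 1), n.choose k * stirling2 (k + 1) (j + 1)
          = (j + 1) * (n.choose k * stirling2 k (j + 1)) + n.choose k * stirling2 k j := by
        intro k _; rw [stirling2_succ]; ring
      rw [Finset.sum_congr rfl hs, Finset.sum_add_distrib, ← Finset.mul_sum, ih, ih,
        stirling2_succ (n + 1) (j + 1)]
      ring

lemma bell_succ (n : ℕ) : bell (n + 1) = ∑ k ∈ range (n + 1), n.choose k * bell k := by
  have key : ∀ k ∈ range (n + 1), n.choose k * bell k
      = ∑ j ∈ range (n + 1), n.choose k * stirling2 k j := by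
    intro k hk
    rw [Finset.mem_range] at hk
    rw [bell, Finset.mul_sum]
    refine Finset.sum_subset (Finset.range_subset_range.2 (by omega)) ?_
    intro j hj hj'
    rw [Finset.mem_range] at hj hj'
    rw [stirling2_eq_zero (show k < j by omega), mul_zero]
  rw [Finset.sum_congr rfl key, Finset.sum_comm]
  have : ∀ j ∈ range (n + 1), ∑ k ∈ range (n + 1), n.choose k * stirling2 k j
      = stirling2 (n + 1) (j + 1) := fun j _ => stirling2_binom n j
  rw [Finset.sum_congr rfl this, bell, Finset.sum_range_succ', stirling2_zero_right, add_zero]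

lemma bell_zero : bell 0 = 1 := rfl

lemma bell_one : bell 1 = 1 := by decide

section Main

variable {p : ℕ}

/-- The umbral linear functional sending `X^n` to the `n`-th Bell number mod `p`. -/
noncomputable def L (f : (ZMod p)[X]) : ZMod p := f.sum fun n a => a * bell n

lemma L_add (f g : (ZMod p)[X]) : L (f + g) = L f + L g :=
  Polynomial.sum_add_index f g _ (fun _ => zero_mul _) (fun _ b c => add_mul b c _)

lemma L_C_mul (c : ZMod p) (f : (ZMod p)[X]) : L (C c * f) = c * L f := by
  rw [← smul_eq_C_mul]
  unfold L
  rw [Polynomial.sum_smul_index f c (fun n a => a * (bell n : ZMod p)) (fun _ => zero_mul _),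
    Polynomial.sum_def,
    Polynomial.sum_def, Finset.mul_sum]
  exact Finset.sum_congr rfl fun i _ => mul_assoc _ _ _

lemma L_X_pow (n : ℕ) : L (X ^ n : (ZMod p)[X]) = bell n := by
  rw [L, ← one_mul (X ^ n : (ZMod p)[X]), ← C_1, C_mul_X_pow_eq_monomial,
    Polynomial.sum_monomial_index (n := n) 1 (fun k a => a * (bell k : ZMod p)) (zero_mul _),
    one_mul]

lemma L_C_mul_X_pow (c : ZMod p) (n : ℕ) : L (C c * X ^ n) = c * (bell n : ZMod p) := by
  rw [L_C_mul, L_X_pow]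

lemma L_sum {ι : Type*} (s : Finset ι) (f : ι → (ZMod p)[X]) :
    L (∑ i ∈ s, f i) = ∑ i ∈ s, L (f i) := by
  classical
  induction s using Finset.induction_on with
  | empty => simp [L]
  | insert _ _ h ih => rw [Finset.sum_insert h, L_add, ih, Finset.sum_insert h]

lemma L_binom (n : ℕ) : L ((X + 1) ^ n : (ZMod p)[X]) = bell (n + 1) := by
  rw [add_pow]
  simp only [one_pow, mul_one]
  rw [L_sum]
  have h : ∀ k ∈ range (n + 1), L ((X : (ZMod p)[X]) ^ k * (n.choose k : (ZMod p)[X]))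
      = (n.choose k : ZMod p) * bell k := by
    intro k _
    rw [mul_comm, ← Polynomial.C_eq_natCast, L_C_mul_X_pow]
  rw [Finset.sum_congr rfl h, bell_succ]
  push_cast
  rfl

lemma L_X_mul (f : (ZMod p)[X]) : L (X * f) = L (f.comp (X + 1)) := by
  induction f using Polynomial.induction_on with
  | C a =>
    rw [C_comp, mul_comm, show (C a : (ZMod p)[X]) * X = C a * X ^ 1 by ring,
      L_C_mul_X_pow, show (C a : (ZMod p)[X]) = C a * X ^ 0 by ring, L_C_mul_X_pow,
      bell_one, bell_zero]
  | add f g hf hg => rw [mul_add, L_add, add_comp, L_add, hf, hg]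
  | monomial n a _ =>
    rw [show (X : (ZMod p)[X]) * (C a * X ^ (n + 1)) = C a * X ^ (n + 2) by ring,
      L_C_mul_X_pow, mul_comp, C_comp, pow_comp, X_comp, L_C_mul, L_binom]

/-- Falling-factorial-style products `∏_{i<n} (X - i)`. -/
noncomputable def ff (n : ℕ) : (ZMod p)[X] := ∏ i ∈ range n, (X - C (i : ZMod p))

lemma ff_succ (n : ℕ) : (ff (n + 1) : (ZMod p)[X]) = X * (ff n).comp (X - 1) := by
  rw [ff, Finset.prod_range_succ', ff, Polynomial.prod_comp, Nat.cast_zero, map_zero, sub_zero, mul_comm]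
  congr 1
  refine Finset.prod_congr rfl fun i _ => ?_
  rw [sub_comp, X_comp, C_comp, Nat.cast_add, Nat.cast_one, map_add, C_1]
  ring

lemma L_ff (n : ℕ) : L (ff n : (ZMod p)[X]) = 1 := by
  induction n with
  | zero =>
    rw [ff, Finset.prod_range_zero, show (1 : (ZMod p)[X]) = C 1 * X ^ 0 by simp,
      L_C_mul_X_pow, bell_zero]
    simp
  | succ n ih =>
    rw [ff_succ, L_X_mul, Polynomial.comp_assoc,
      show ((X : (ZMod p)[X]) - 1).comp (X + 1) = X by
        rw [sub_comp, X_comp, one_comp]; ring,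
      comp_X, ih]

variable [Fact p.Prime]

lemma prod_univ_X_sub_C : ∏ a : ZMod p, (X - C a) = (X ^ p - X : (ZMod p)[X]) := by
  have hp1 : 1 < p := (Fact.out : p.Prime).one_lt
  have hroots := FiniteField.roots_X_pow_card_sub_X (ZMod p)
  rw [ZMod.card] at hroots
  have hmonic : (X ^ p - X : (ZMod p)[X]).Monic :=
    (monic_X_pow p).sub_of_left (by
      rw [degree_X, degree_X_pow]; exact_mod_cast hp1)
  have hcard : Multiset.card (X ^ p - X : (ZMod p)[X]).roots
      = (X ^ p - X : (ZMod p)[X]).natDegree := by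
    rw [hroots, FiniteField.X_pow_card_sub_X_natDegree_eq _ hp1]
    simpa using (ZMod.card p)
  have h := Polynomial.C_leadingCoeff_mul_prod_multiset_X_sub_C hcard
  rw [hmonic.leadingCoeff, map_one, one_mul, hroots] at h
  rw [← h, Finset.prod_eq_multiset_prod]

lemma ff_eq_prod_univ : (ff p : (ZMod p)[X]) = ∏ a : ZMod p, (X - C a) := by
  haveI : NeZero p := ⟨(Fact.out : p.Prime).ne_zero⟩
  rw [ff]
  refine Finset.prod_bij (fun i _ => (i : ZMod p)) (fun a _ => Finset.mem_univ _) ?_ ?_ ?_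
  · intro a ha b hb hab
    rw [Finset.mem_range] at ha hb
    have := congrArg ZMod.val hab
    rwa [ZMod.val_cast_of_lt ha, ZMod.val_cast_of_lt hb] at this
  · intro b _
    exact ⟨b.val, Finset.mem_range.2 (ZMod.val_lt b), ZMod.natCast_zmod_val b⟩
  · intro a _; rfl

/-- `Q b = ∏_{c ≠ b} (X - c)`. -/
noncomputable def Q (b : ZMod p) : (ZMod p)[X] := ∏ c ∈ Finset.univ.erase b, (X - C c)

lemma X_sub_C_mul_Q (b : ZMod p) : (X - C b) * Q b = X ^ p - X := by
  rw [Q, ← prod_univ_X_sub_C]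
  exact Finset.mul_prod_erase Finset.univ (fun c => X - C c) (Finset.mem_univ b)

lemma L_X_pow_sub_X : L (X ^ p - X : (ZMod p)[X]) = 1 := by
  rw [← prod_univ_X_sub_C, ← ff_eq_prod_univ, L_ff]

lemma Q_comp (b : ZMod p) : (Q b).comp (X + 1) = Q (b - 1) := by
  rw [Q, Polynomial.prod_comp]
  have h : ∀ c ∈ Finset.univ.erase b, ((X : (ZMod p)[X]) - C c).comp (X + 1)
      = X - C (c - 1) := by
    intro c _
    rw [sub_comp, X_comp, C_comp, map_sub, C_1]
    ring
  rw [Finset.prod_congr rfl h, Q]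
  refine Finset.prod_bij (fun c _ => c - 1) ?_ ?_ ?_ ?_
  · intro c hc
    rw [Finset.mem_erase] at hc ⊢
    exact ⟨fun h' => hc.1 (by linear_combination h'), Finset.mem_univ _⟩
  · intro a _ b _ h'
    linear_combination h'
  · intro c hc
    rw [Finset.mem_erase] at hc
    refine ⟨c + 1, Finset.mem_erase.2 ⟨fun h' => hc.1 (by linear_combination h'),
      Finset.mem_univ _⟩, by ring⟩
  · intro a _; rfl

lemma L_Q_sub_one (b : ZMod p) : L (Q (b - 1)) = 1 + b * L (Q b) := by
  rw [← Q_comp, ← L_X_mul,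
    show (X : (ZMod p)[X]) * Q b = (X ^ p - X) + C b * Q b by
      rw [← X_sub_C_mul_Q b]; ring,
    L_add, L_X_pow_sub_X, L_C_mul]

lemma L_Q_neg (n : ℕ) :
    L (Q (-((n : ZMod p) + 1))) = (-1) ^ n * (numDerangements n : ZMod p) := by
  induction n with
  | zero =>
    have h := L_Q_sub_one (0 : ZMod p)
    rw [zero_sub, zero_mul, add_zero] at h
    rw [Nat.cast_zero, zero_add, h]
    simp [numDerangements]
  | succ n ih =>
    have h := L_Q_sub_one (-((n : ZMod p) + 1))
    have hd : ((numDerangements (n + 1) : ℕ) : ZMod p)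
        = ((n : ZMod p) + 1) * (numDerangements n : ZMod p) - (-1) ^ n := by
      have h2 := congrArg (fun z : ℤ => (z : ZMod p)) (numDerangements_succ n)
      push_cast at h2
      exact h2
    rw [show -((((n + 1) : ℕ) : ZMod p) + 1) = (-((n : ZMod p) + 1)) - 1 by
      push_cast; ring, h, ih, hd]
    have hsq : ((-1 : ZMod p)) ^ n * (-1) ^ n = 1 := by
      rw [← pow_add, ← two_mul, pow_mul]
      norm_num
    linear_combination (-1 : ZMod p) * hsq

end Main

end SunZagierAux

theorem sun_zagier_n2 (m p : ℕ) (hm : 1 ≤ m) (hp : p.Prime) (hpm : ¬ p ∣ m) :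
    (∑ k ∈ Icc 1 (p - 1), (-(m : ℤ)) ^ (p - 1 - k) * bell (k + 2)) ≡
      (-1) ^ m * ((numDerangements m : ℤ) - (numDerangements (m + 1) : ℤ)) [ZMOD p] := by
  haveI : Fact p.Prime := ⟨hp⟩
  have hp1 : 0 < p := hp.pos
  open SunZagierAux in
  rw [← ZMod.intCast_eq_intCast_iff]
  push_cast
  set a : ZMod p := -(m : ZMod p) with ha_def
  have ha : a ≠ 0 := by
    rw [ha_def, neg_ne_zero, Ne, ZMod.natCast_eq_zero_iff]
    exact hpm
  -- Step 1: the left side is L (X^2 * Q a)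
  have hfermat : a ^ (p - 1) = 1 := ZMod.pow_card_sub_one_eq_one ha
  have hQ : (∑ k ∈ Icc 1 (p - 1), C (a ^ (p - 1 - k)) * X ^ k) = Q a := by
    have hne : ((X : (ZMod p)[X]) - C a) ≠ 0 := X_sub_C_ne_zero a
    refine mul_left_cancel₀ hne ?_
    rw [X_sub_C_mul_Q]
    have hIcc : Icc 1 (p - 1) = Ico 1 p := by
      rw [← Finset.Ico_succ_right_eq_Icc, Nat.succ_eq_succ]
      congr 1
      omega
    rw [hIcc, Finset.sum_Ico_eq_sum_range]
    have hsum : (∑ i ∈ range (p - 1), C (a ^ (p - 1 - (1 + i))) * X ^ (1 + i))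
        = X * ∑ i ∈ range (p - 1), X ^ i * (C a) ^ (p - 1 - 1 - i) := by
      rw [Finset.mul_sum]
      refine Finset.sum_congr rfl fun i _ => ?_
      rw [← C_pow, show p - 1 - (1 + i) = p - 1 - 1 - i by omega]
      ring
    rw [hsum, mul_comm ((X : (ZMod p)[X]) - C a), mul_assoc, geom_sum₂_mul,
      ← C_pow, hfermat, map_one]
    have hX : (X : (ZMod p)[X]) * (X ^ (p - 1) - 1) = X ^ p - X := by
      rw [mul_sub, mul_one, ← pow_succ', show p - 1 + 1 = p from by omega]
    rw [hX]
  have hL : (∑ k ∈ Icc 1 (p - 1), a ^ (p - 1 - k) * (bell (k + 2) : ZMod p))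
      = L (X ^ 2 * Q a) := by
    have h1 : (X : (ZMod p)[X]) ^ 2 * Q a
        = ∑ k ∈ Icc 1 (p - 1), C (a ^ (p - 1 - k)) * X ^ (k + 2) := by
      rw [← hQ, Finset.mul_sum]
      refine Finset.sum_congr rfl fun k _ => ?_
      ring
    rw [h1, L_sum]
    exact Finset.sum_congr rfl fun k _ => (L_C_mul_X_pow _ _).symm
  rw [hL]
  -- Step 2: shift twice
  have h2 : L ((X : (ZMod p)[X]) ^ 2 * Q a) = L (Q (a - 1 - 1)) + L (Q (a - 1)) := by
    rw [show (X : (ZMod p)[X]) ^ 2 * Q a = X * (X * Q a) by ring, L_X_mul, mul_comp,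
      X_comp, Q_comp, show ((X : (ZMod p)[X]) + 1) * Q (a - 1) = X * Q (a - 1) + Q (a - 1)
        by ring, L_add, L_X_mul, Q_comp]
  rw [h2]
  have e1 : a - 1 = -((m : ZMod p) + 1) := by rw [ha_def]; ring
  have e2 : a - 1 - 1 = -(((m + 1 : ℕ) : ZMod p) + 1) := by rw [ha_def]; push_cast; ring
  rw [e2, e1, L_Q_neg, L_Q_neg]
  push_cast
  ring
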